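/- For every N ≥ 1 and β > 0, the quenched free energies at sizes N and N+1 satisfy the exact finite-volume relation (N+1) α_{N+1}(β) = ln 2 + N α_N(β') + Ψ_N(β'^2, β'), where β' = β √(N/(N+1)) and Ψ_N(t,β) is the cavity function with cavity fields that are i.i.d. standard Gaussians independent of the N-spin couplings. -/

import Mathlib

open MeasureTheory ProbabilityTheory Filter

noncomputable section

/-- The real spin value of a Boolean spin. -/
def spin (b : Bool) : ℝ := if b then 1 else -1

/-- SK Hamiltonian with zero external field:
`H_N(σ,J) = -(1/√N) Σ_{i<j} J_{ij} σ_i σ_j`. -/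
def hamSK (N : ℕ) (J : Fin N → Fin N → ℝ) (σ : Fin N → Bool) : ℝ :=
  -(1 / Real.sqrt N) * ∑ i : Fin N, ∑ j : Fin N,
    if i < j then J i j * spin (σ i) * spin (σ j) else 0

/-- Partition function `Z_N(β,J)`. -/
def partZ (N : ℕ) (β : ℝ) (J : Fin N → Fin N → ℝ) : ℝ :=
  ∑ σ : Fin N → Bool, Real.exp (-β * hamSK N J σ)

/-- Gibbs state `ω(f)`. -/
def gibbs (N : ℕ) (β : ℝ) (J : Fin N → Fin N → ℝ) (f : (Fin N → Bool) → ℝ) : ℝ :=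
  (∑ σ : Fin N → Bool, f σ * Real.exp (-β * hamSK N J σ)) / partZ N β J

/-- Replicated (product) Gibbs state `Ω(F)` over `s` replicas sharing the couplings. -/
def gibbsRep (N s : ℕ) (β : ℝ) (J : Fin N → Fin N → ℝ)
    (F : (Fin s → Fin N → Bool) → ℝ) : ℝ :=
  (∑ σ : Fin s → Fin N → Bool,
    F σ * ∏ a : Fin s, Real.exp (-β * hamSK N J (σ a))) / (partZ N β J) ^ s

/-- Product of i.i.d. standard Gaussians on the couplings. -/
def gaussJ (N : ℕ) : Measure (Fin N → Fin N → ℝ) :=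
  Measure.pi fun _ => Measure.pi fun _ => gaussianReal 0 1

/-- Quenched replicated Gibbs average `⟨F⟩_{N,β} = E[Ω(F)]`. -/
def quenched (N s : ℕ) (β : ℝ) (F : (Fin s → Fin N → Bool) → ℝ) : ℝ :=
  ∫ J, gibbsRep N s β J F ∂(gaussJ N)

/-- Overlap of two configurations `q = N⁻¹ Σ_i σ_i τ_i`. -/
def overlap (N : ℕ) (σ τ : Fin N → Bool) : ℝ :=
  (1 / (N : ℝ)) * ∑ i : Fin N, spin (σ i) * spin (τ i)

/-- Extended (cavity) partition function `Z_{N,t}(β,J)` with cavity fields `g`. -/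
def partZt (N : ℕ) (β t : ℝ) (J : Fin N → Fin N → ℝ) (g : Fin N → ℝ) : ℝ :=
  ∑ σ : Fin N → Bool,
    Real.exp (-β * hamSK N J σ + Real.sqrt (t / (N : ℝ)) * ∑ i : Fin N, g i * spin (σ i))

/-- Extended Gibbs state `ω_t(f)`. -/
def gibbsT (N : ℕ) (β t : ℝ) (J : Fin N → Fin N → ℝ) (g : Fin N → ℝ)
    (f : (Fin N → Bool) → ℝ) : ℝ :=
  (∑ σ : Fin N → Bool,
    f σ * Real.exp (-β * hamSK N J σ + Real.sqrt (t / (N : ℝ)) * ∑ i : Fin N, g i * spin (σ i)))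
    / partZt N β t J g

/-- Replicated extended Gibbs state `Ω_t(F)`. -/
def gibbsRepT (N s : ℕ) (β t : ℝ) (J : Fin N → Fin N → ℝ) (g : Fin N → ℝ)
    (F : (Fin s → Fin N → Bool) → ℝ) : ℝ :=
  (∑ σ : Fin s → Fin N → Bool,
    F σ * ∏ a : Fin s,
      Real.exp (-β * hamSK N J (σ a)
        + Real.sqrt (t / (N : ℝ)) * ∑ i : Fin N, g i * spin (σ a i)))
    / (partZt N β t J g) ^ s

/-- Product of i.i.d. standard Gaussians on the cavity fields. -/
def gaussCav (N : ℕ) : Measure (Fin N → ℝ) :=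
  Measure.pi fun _ => gaussianReal 0 1

/-- Quenched replicated extended Gibbs average `⟨F⟩_{N,t,β} = E[Ω_t(F)]`. -/
def quenchedT (N s : ℕ) (β t : ℝ) (F : (Fin s → Fin N → Bool) → ℝ) : ℝ :=
  ∫ x : (Fin N → Fin N → ℝ) × (Fin N → ℝ),
    gibbsRepT N s β t x.1 x.2 F ∂((gaussJ N).prod (gaussCav N))

/-- Cavity function `Ψ_N(t,β) = E[ln (Z_{N,t}/Z_N)]`. -/
def cavityFn (N : ℕ) (t β : ℝ) : ℝ :=
  ∫ x : (Fin N → Fin N → ℝ) × (Fin N → ℝ),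
    Real.log (partZt N β t x.1 x.2 / partZ N β x.1) ∂((gaussJ N).prod (gaussCav N))

/-- Quenched free energy density `α_N(β) = N⁻¹ E[ln Z_N(β,J)]`. -/
def alphaN (N : ℕ) (β : ℝ) : ℝ :=
  (N : ℝ)⁻¹ * ∫ J, Real.log (partZ N β J) ∂(gaussJ N)


/-! ### Auxiliary lemmas -/

instance (N : ℕ) : IsProbabilityMeasure (gaussJ N) := by unfold gaussJ; infer_instance
instance (N : ℕ) : IsProbabilityMeasure (gaussCav N) := by unfold gaussCav; infer_instance

lemma spin_not (b : Bool) : spin (!b) = -spin b := by cases b <;> simp [spin]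

lemma abs_spin (b : Bool) : |spin b| = 1 := by cases b <;> simp [spin]

lemma partZ_pos (N : ℕ) (β : ℝ) (J : Fin N → Fin N → ℝ) : 0 < partZ N β J :=
  Finset.sum_pos (fun _ _ => Real.exp_pos _) Finset.univ_nonempty

lemma partZt_pos (N : ℕ) (β t : ℝ) (J : Fin N → Fin N → ℝ) (g : Fin N → ℝ) :
    0 < partZt N β t J g :=
  Finset.sum_pos (fun _ _ => Real.exp_pos _) Finset.univ_nonempty

lemma hamSK_flip (N : ℕ) (J : Fin N → Fin N → ℝ) (σ : Fin N → Bool) :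
    hamSK N J (fun i => !(σ i)) = hamSK N J σ := by
  unfold hamSK
  congr 1
  refine Finset.sum_congr rfl fun i _ => Finset.sum_congr rfl fun j _ => ?_
  by_cases h : i < j <;> simp [h, spin_not]

lemma cav_flip (N : ℕ) (g : Fin N → ℝ) (σ : Fin N → Bool) :
    ∑ i : Fin N, g i * spin (!(σ i)) = -∑ i : Fin N, g i * spin (σ i) := by
  simp [spin_not, mul_neg, Finset.sum_neg_distrib]

def absSum (N : ℕ) (J : Fin N → Fin N → ℝ) : ℝ := ∑ i : Fin N, ∑ j : Fin N, |J i j|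

lemma absSum_nonneg (N : ℕ) (J : Fin N → Fin N → ℝ) : 0 ≤ absSum N J :=
  Finset.sum_nonneg fun _ _ => Finset.sum_nonneg fun _ _ => abs_nonneg _

lemma abs_hamSK_le (N : ℕ) (J : Fin N → Fin N → ℝ) (σ : Fin N → Bool) :
    |hamSK N J σ| ≤ (1 / Real.sqrt N) * absSum N J := by
  unfold hamSK
  rw [abs_mul, abs_neg, abs_of_nonneg (by positivity : (0:ℝ) ≤ 1 / Real.sqrt N)]
  refine mul_le_mul_of_nonneg_left ?_ (by positivity)
  refine (Finset.abs_sum_le_sum_abs _ _).trans ?_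
  refine Finset.sum_le_sum fun i _ => ?_
  refine (Finset.abs_sum_le_sum_abs _ _).trans ?_
  refine Finset.sum_le_sum fun j _ => ?_
  by_cases h : i < j
  · simp [h, abs_mul, abs_spin]
  · simp [h, abs_nonneg]

lemma abs_log_partZ_le (N : ℕ) (β : ℝ) (J : Fin N → Fin N → ℝ) :
    |Real.log (partZ N β J)|
      ≤ (N : ℝ) * Real.log 2 + (|β| / Real.sqrt N) * absSum N J := by
  set c := (|β| / Real.sqrt N) * absSum N J with hc
  have hc0 : 0 ≤ c := mul_nonneg (by positivity) (absSum_nonneg N J)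
  have hbound : ∀ σ : Fin N → Bool, |(-β) * hamSK N J σ| ≤ c := by
    intro σ
    rw [abs_mul, abs_neg]
    calc |β| * |hamSK N J σ| ≤ |β| * ((1 / Real.sqrt N) * absSum N J) :=
          mul_le_mul_of_nonneg_left (abs_hamSK_le N J σ) (abs_nonneg β)
      _ = c := by rw [hc]; ring
  have hup : partZ N β J ≤ (2 : ℝ) ^ N * Real.exp c := by
    unfold partZ
    calc ∑ σ : Fin N → Bool, Real.exp (-β * hamSK N J σ)
        ≤ ∑ _σ : Fin N → Bool, Real.exp c := by
          refine Finset.sum_le_sum fun σ _ => Real.exp_le_exp.2 ?_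
          exact (le_abs_self _).trans (hbound σ)
      _ = (2 : ℝ) ^ N * Real.exp c := by
          rw [Finset.sum_const, Finset.card_univ]
          simp [Fintype.card_fun, nsmul_eq_mul]
  have hlo : Real.exp (-c) ≤ partZ N β J := by
    have h1 : Real.exp (-c) ≤ Real.exp (-β * hamSK N J (fun _ => false)) := by
      refine Real.exp_le_exp.2 ?_
      have := (abs_le.1 (hbound (fun _ => false))).1
      linarith
    refine h1.trans ?_
    unfold partZ
    exact Finset.single_le_sum (f := fun σ => Real.exp (-β * hamSK N J σ))
      (fun σ _ => (Real.exp_pos _).le) (Finset.mem_univ _)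
  rw [abs_le]
  constructor
  · have := Real.log_le_log (Real.exp_pos _) hlo
    rw [Real.log_exp] at this
    have h2 : (0:ℝ) ≤ (N : ℝ) * Real.log 2 := by positivity
    linarith
  · have := Real.log_le_log (partZ_pos N β J) hup
    rwa [Real.log_mul (by positivity) (Real.exp_ne_zero _), Real.log_pow, Real.log_exp] at this

lemma abs_log_ratio_le (N : ℕ) (β t : ℝ) (J : Fin N → Fin N → ℝ) (g : Fin N → ℝ) :
    |Real.log (partZt N β t J g / partZ N β J)|
      ≤ Real.sqrt (t / N) * ∑ i : Fin N, |g i| := by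
  set c := Real.sqrt (t / N) * ∑ i : Fin N, |g i| with hcdef
  have hc0 : 0 ≤ c :=
    mul_nonneg (Real.sqrt_nonneg _) (Finset.sum_nonneg fun _ _ => abs_nonneg _)
  have hx : ∀ σ : Fin N → Bool,
      |Real.sqrt (t / N) * ∑ i : Fin N, g i * spin (σ i)| ≤ c := by
    intro σ
    rw [abs_mul, abs_of_nonneg (Real.sqrt_nonneg _)]
    refine mul_le_mul_of_nonneg_left ?_ (Real.sqrt_nonneg _)
    refine (Finset.abs_sum_le_sum_abs _ _).trans ?_
    refine Finset.sum_le_sum fun i _ => ?_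
    rw [abs_mul, abs_spin, mul_one]
  have hup : partZt N β t J g ≤ partZ N β J * Real.exp c := by
    unfold partZt partZ
    rw [Finset.sum_mul]
    refine Finset.sum_le_sum fun σ _ => ?_
    rw [Real.exp_add]
    refine mul_le_mul_of_nonneg_left ?_ (Real.exp_pos _).le
    exact Real.exp_le_exp.2 ((le_abs_self _).trans (hx σ))
  have hlo : partZ N β J * Real.exp (-c) ≤ partZt N β t J g := by
    unfold partZt partZ
    rw [Finset.sum_mul]
    refine Finset.sum_le_sum fun σ _ => ?_
    rw [Real.exp_add]
    refine mul_le_mul_of_nonneg_left ?_ (Real.exp_pos _).le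
    refine Real.exp_le_exp.2 ?_
    have := (abs_le.1 (hx σ)).1
    linarith
  have hZ := partZ_pos N β J
  have hZt := partZt_pos N β t J g
  rw [abs_le]
  constructor
  · have h1 : Real.exp (-c) ≤ partZt N β t J g / partZ N β J := by
      rw [le_div_iff₀ hZ]; linarith [hlo]
    have := Real.log_le_log (Real.exp_pos _) h1
    rwa [Real.log_exp] at this
  · have h1 : partZt N β t J g / partZ N β J ≤ Real.exp c := by
      rw [div_le_iff₀ hZ]; linarith [hup]
    have := Real.log_le_log (div_pos hZt hZ) h1
    rwa [Real.log_exp] at this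

/-! #### Measurability -/

lemma measurable_coord (N : ℕ) (i j : Fin N) :
    Measurable (fun J : Fin N → Fin N → ℝ => J i j) :=
  (measurable_pi_apply j).comp (measurable_pi_apply i)

lemma measurable_hamSK (N : ℕ) (σ : Fin N → Bool) :
    Measurable (fun J : Fin N → Fin N → ℝ => hamSK N J σ) := by
  unfold hamSK
  refine Measurable.const_mul ?_ _
  refine Finset.measurable_sum _ fun i _ => Finset.measurable_sum _ fun j _ => ?_
  by_cases h : i < j
  · simp only [h, if_true]
    exact ((measurable_coord N i j).mul_const _).mul_const _
  · simp only [h, if_false]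
    exact measurable_const

lemma measurable_partZ (N : ℕ) (β : ℝ) : Measurable (partZ N β) := by
  unfold partZ
  exact Finset.measurable_sum _ fun σ _ =>
    (Real.measurable_exp.comp ((measurable_hamSK N σ).const_mul (-β)))

lemma measurable_partZt (N : ℕ) (β t : ℝ) :
    Measurable (fun x : (Fin N → Fin N → ℝ) × (Fin N → ℝ) => partZt N β t x.1 x.2) := by
  unfold partZt
  refine Finset.measurable_sum _ fun σ _ => Real.measurable_exp.comp ?_
  refine Measurable.add ?_ ?_
  · exact ((measurable_hamSK N σ).comp measurable_fst).const_mul (-β)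
  · refine Measurable.const_mul ?_ _
    refine Finset.measurable_sum _ fun i _ => ?_
    exact ((measurable_pi_apply i).comp measurable_snd).mul_const _

/-! #### Measure preservation -/

lemma mp_fst {X Y : Type*} [MeasurableSpace X] [MeasurableSpace Y]
    (μ : Measure X) (ν : Measure Y) [IsProbabilityMeasure ν] [SFinite μ] :
    MeasurePreserving Prod.fst (μ.prod ν) μ :=
  ⟨measurable_fst, by rw [Measure.map_fst_prod, measure_univ, one_smul]⟩

lemma mp_snd {X Y : Type*} [MeasurableSpace X] [MeasurableSpace Y]
    (μ : Measure X) (ν : Measure Y) [IsProbabilityMeasure μ] [SFinite ν] :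
    MeasurePreserving Prod.snd (μ.prod ν) ν :=
  ⟨measurable_snd, by rw [Measure.map_snd_prod, measure_univ, one_smul]⟩

lemma mp_eval {ι : Type*} [Fintype ι] [DecidableEq ι] {X : Type*} [MeasurableSpace X]
    (μ : Measure X) [IsProbabilityMeasure μ] (i : ι) :
    MeasurePreserving (fun a : ι → X => a i) (Measure.pi fun _ => μ) μ := by
  refine ⟨measurable_pi_apply i, ?_⟩
  refine Measure.ext fun s hs => ?_
  rw [Measure.map_apply (measurable_pi_apply i) hs]
  have hpre : (fun a : ι → X => a i) ⁻¹' s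
      = Set.pi Set.univ (Function.update (fun _ => Set.univ) i s) := by
    ext a
    simp only [Set.mem_preimage, Set.mem_pi, Set.mem_univ, true_implies]
    constructor
    · intro h j
      rcases eq_or_ne j i with rfl | hj
      · simpa [Function.update_self] using h
      · simp [Function.update_of_ne hj]
    · intro h
      simpa [Function.update_self] using h i
  rw [hpre, Measure.pi_pi]
  rw [Finset.prod_eq_single i (fun j _ hj => by simp [Function.update, hj]) (by simp)]
  simp

lemma mp_pi_comp {X Y : Type*} [MeasurableSpace X] [MeasurableSpace Y]
    {μ : Measure X} {ν : Measure Y} [SigmaFinite μ] [SigmaFinite ν] {n : ℕ} {f : X → Y}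
    (hf : MeasurePreserving f μ ν) :
    MeasurePreserving (fun a : Fin n → X => fun i => f (a i))
      (Measure.pi fun _ => μ) (Measure.pi fun _ => ν) := by
  have hm : Measurable (fun a : Fin n → X => fun i => f (a i)) :=
    measurable_pi_lambda _ fun i => hf.measurable.comp (measurable_pi_apply i)
  refine ⟨hm, ?_⟩
  refine (Measure.pi_eq fun s hs => ?_).symm
  rw [Measure.map_apply hm (MeasurableSet.univ_pi hs)]
  have hpre : (fun a : Fin n → X => fun i => f (a i)) ⁻¹' Set.pi Set.univ s
      = Set.pi Set.univ (fun i => f ⁻¹' s i) := by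
    ext a; simp [Set.mem_pi]
  rw [hpre, Measure.pi_pi]
  refine Finset.prod_congr rfl fun i _ => ?_
  rw [← hf.map_eq, Measure.map_apply hf.measurable (hs i)]

lemma mp_cavity (N : ℕ) :
    MeasurePreserving
      (fun J : Fin (N+1) → Fin (N+1) → ℝ =>
        ((fun i j => J i.castSucc j.castSucc, fun i => J i.castSucc (Fin.last N)) :
          (Fin N → Fin N → ℝ) × (Fin N → ℝ)))
      (gaussJ (N+1)) ((gaussJ N).prod (gaussCav N)) := by
  set ρ : Measure (Fin (N+1) → ℝ) := Measure.pi fun _ => gaussianReal 0 1 with hρ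
  have h1 : MeasurePreserving
      (MeasurableEquiv.piFinSuccAbove (fun _ : Fin (N+1) => (Fin (N+1) → ℝ)) (Fin.last N))
      (gaussJ (N+1)) (ρ.prod (Measure.pi fun _ : Fin N => ρ)) :=
    measurePreserving_piFinSuccAbove (fun _ => ρ) (Fin.last N)
  have h2 : MeasurePreserving Prod.snd (ρ.prod (Measure.pi fun _ : Fin N => ρ))
      (Measure.pi fun _ : Fin N => ρ) := mp_snd _ _
  have h3 : MeasurePreserving
      (fun r : Fin (N+1) → ℝ => ((fun j : Fin N => r j.castSucc, r (Fin.last N)) :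
        (Fin N → ℝ) × ℝ))
      ρ ((gaussCav N).prod (gaussianReal 0 1)) := by
    have ha : MeasurePreserving
        (MeasurableEquiv.piFinSuccAbove (fun _ : Fin (N+1) => ℝ) (Fin.last N))
        ρ ((gaussianReal 0 1).prod (gaussCav N)) :=
      measurePreserving_piFinSuccAbove (fun _ => gaussianReal 0 1) (Fin.last N)
    have hb := (Measure.measurePreserving_swap).comp ha
    have hfe : (Prod.swap ∘ (MeasurableEquiv.piFinSuccAbove (fun _ : Fin (N+1) => ℝ)
        (Fin.last N)))
        = fun r : Fin (N+1) → ℝ => ((fun j : Fin N => r j.castSucc, r (Fin.last N)) :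
          (Fin N → ℝ) × ℝ) := by
      funext r
      simp only [Function.comp_apply, MeasurableEquiv.piFinSuccAbove_apply, Prod.swap,
        Fin.insertNthEquiv, Equiv.coe_fn_symm_mk]
      simp [Fin.succAbove_last]
      rfl
    rwa [hfe] at hb
  have h4 : MeasurePreserving
      (fun a : Fin N → (Fin (N+1) → ℝ) =>
        fun i => ((fun j : Fin N => a i j.castSucc, a i (Fin.last N)) : (Fin N → ℝ) × ℝ))
      (Measure.pi fun _ : Fin N => ρ)
      (Measure.pi fun _ : Fin N => (gaussCav N).prod (gaussianReal 0 1)) :=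
    mp_pi_comp h3
  have h5 : MeasurePreserving
      (MeasurableEquiv.arrowProdEquivProdArrow (Fin N → ℝ) ℝ (Fin N))
      (Measure.pi fun _ : Fin N => (gaussCav N).prod (gaussianReal 0 1))
      ((gaussJ N).prod (gaussCav N)) :=
    measurePreserving_arrowProdEquivProdArrow _ _ _ (fun _ => gaussCav N)
      (fun _ => gaussianReal 0 1)
  have hall := h5.comp (h4.comp (h2.comp h1))
  have heq : ((MeasurableEquiv.arrowProdEquivProdArrow (Fin N → ℝ) ℝ (Fin N)) ∘
      ((fun a : Fin N → (Fin (N+1) → ℝ) =>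
        fun i => ((fun j : Fin N => a i j.castSucc, a i (Fin.last N)) : (Fin N → ℝ) × ℝ)) ∘
       (Prod.snd ∘
        (MeasurableEquiv.piFinSuccAbove (fun _ : Fin (N+1) => (Fin (N+1) → ℝ)) (Fin.last N)))))
      = fun J : Fin (N+1) → Fin (N+1) → ℝ =>
        ((fun i j => J i.castSucc j.castSucc, fun i => J i.castSucc (Fin.last N)) :
          (Fin N → Fin N → ℝ) × (Fin N → ℝ)) := by
    funext J
    simp only [Function.comp_apply, MeasurableEquiv.piFinSuccAbove_apply,
      MeasurableEquiv.arrowProdEquivProdArrow, Equiv.arrowProdEquivProdArrow,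
      MeasurableEquiv.coe_mk, Equiv.coe_fn_mk, Fin.insertNthEquiv, Equiv.coe_fn_symm_mk]
    simp [Fin.succAbove_last]
    exact ⟨rfl, rfl⟩
  rwa [heq] at hall

/-! #### Integrability -/

lemma integrable_id_gauss : Integrable (fun x : ℝ => x) (gaussianReal 0 1) := by
  rw [gaussianReal_of_var_ne_zero 0 one_ne_zero]
  rw [integrable_withDensity_iff (measurable_gaussianPDF 0 1)
    (ae_of_all _ fun x => ENNReal.ofReal_lt_top)]
  have h := (integrable_mul_exp_neg_mul_sq (b := 1/2) (by norm_num)).const_mul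
    ((Real.sqrt (2 * Real.pi))⁻¹)
  refine h.congr (ae_of_all _ fun x => ?_)
  simp only [gaussianPDF_def, gaussianPDFReal_def]
  rw [ENNReal.toReal_ofReal (by positivity)]
  push_cast
  ring_nf

lemma integrable_absSum (N : ℕ) : Integrable (absSum N) (gaussJ N) := by
  unfold absSum
  refine integrable_finset_sum _ fun i _ => integrable_finset_sum _ fun j _ => ?_
  have hmp : MeasurePreserving (fun J : Fin N → Fin N → ℝ => J i j)
      (gaussJ N) (gaussianReal 0 1) :=
    (mp_eval (gaussianReal 0 1) j).comp (mp_eval (Measure.pi fun _ => gaussianReal 0 1) i)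
  exact (hmp.integrable_comp continuous_abs.aestronglyMeasurable).2 integrable_id_gauss.abs

lemma integrable_sum_abs_cav (N : ℕ) :
    Integrable (fun g : Fin N → ℝ => ∑ i : Fin N, |g i|) (gaussCav N) := by
  refine integrable_finset_sum _ fun i _ => ?_
  exact ((mp_eval (gaussianReal 0 1) i).integrable_comp
    continuous_abs.aestronglyMeasurable).2 integrable_id_gauss.abs

lemma integrable_log_partZ (N : ℕ) (β : ℝ) :
    Integrable (fun J => Real.log (partZ N β J)) (gaussJ N) := by
  refine Integrable.mono'
    ((integrable_const ((N : ℝ) * Real.log 2)).add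
      ((integrable_absSum N).const_mul (|β| / Real.sqrt N)))
    ((measurable_partZ N β).log.aestronglyMeasurable)
    (ae_of_all _ fun J => ?_)
  simpa [Real.norm_eq_abs] using abs_log_partZ_le N β J

lemma integrable_log_partZ_fst (N : ℕ) (β : ℝ) :
    Integrable (fun x : (Fin N → Fin N → ℝ) × (Fin N → ℝ) => Real.log (partZ N β x.1))
      ((gaussJ N).prod (gaussCav N)) :=
  ((mp_fst (gaussJ N) (gaussCav N)).integrable_comp
    ((measurable_partZ N β).log.aestronglyMeasurable)).2 (integrable_log_partZ N β)

lemma integrable_log_ratio (N : ℕ) (β t : ℝ) :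
    Integrable (fun x : (Fin N → Fin N → ℝ) × (Fin N → ℝ) =>
        Real.log (partZt N β t x.1 x.2 / partZ N β x.1))
      ((gaussJ N).prod (gaussCav N)) := by
  have hbd : Integrable (fun x : (Fin N → Fin N → ℝ) × (Fin N → ℝ) =>
      Real.sqrt (t / N) * ∑ i : Fin N, |x.2 i|) ((gaussJ N).prod (gaussCav N)) := by
    refine Integrable.const_mul ?_ _
    refine ((mp_snd (gaussJ N) (gaussCav N)).integrable_comp ?_).2 (integrable_sum_abs_cav N)
    exact (Finset.measurable_sum _ fun i _ =>
      (measurable_pi_apply i).abs).aestronglyMeasurable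
  refine Integrable.mono' hbd ?_ (ae_of_all _ fun x => ?_)
  · exact ((measurable_partZt N β t).div
      ((measurable_partZ N β).comp measurable_fst)).log.aestronglyMeasurable
  · simpa [Real.norm_eq_abs] using abs_log_ratio_le N β t x.1 x.2

/-! #### The partition function recursion -/

lemma partZ_succ (N : ℕ) (hN : 1 ≤ N) (β β' : ℝ) (hβ' : 0 < β')
    (hc : β / Real.sqrt ((N+1 : ℕ) : ℝ) = β' / Real.sqrt N)
    (J : Fin (N+1) → Fin (N+1) → ℝ) :
    partZ (N+1) β J
      = 2 * partZt N β' (β'^2) (fun i j => J i.castSucc j.castSucc)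
          (fun i => J i.castSucc (Fin.last N)) := by
  have hst : Real.sqrt (β'^2 / N) = β' / Real.sqrt N := by
    rw [Real.sqrt_div (sq_nonneg β'), Real.sqrt_sq hβ'.le]
  have key : ∀ (b : Bool) (σ : Fin N → Bool),
      -β * hamSK (N+1) J ((Fin.insertNthEquiv (fun _ => Bool) (Fin.last N)) (b, σ))
        = -β' * hamSK N (fun i j => J i.castSucc j.castSucc) σ
          + spin b * (Real.sqrt (β'^2 / (N : ℝ)) *
              ∑ i : Fin N, J i.castSucc (Fin.last N) * spin (σ i)) := by
    intro b σ
    set τ : Fin (N+1) → Bool := (Fin.insertNthEquiv (fun _ => Bool) (Fin.last N)) (b, σ)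
      with hτ
    have hτc : ∀ j : Fin N, τ j.castSucc = σ j := by
      intro j
      rw [hτ, Fin.insertNthEquiv_apply, ← Fin.succAbove_last, Fin.insertNth_apply_succAbove]
    have hτl : τ (Fin.last N) = b := by
      rw [hτ, Fin.insertNthEquiv_apply, Fin.insertNth_apply_same]
    have hS : (∑ i : Fin (N+1), ∑ j : Fin (N+1),
          if i < j then J i j * spin (τ i) * spin (τ j) else 0)
        = (∑ i : Fin N, ∑ j : Fin N,
            if i < j then J i.castSucc j.castSucc * spin (σ i) * spin (σ j) else 0)
          + (∑ i : Fin N, J i.castSucc (Fin.last N) * spin (σ i)) * spin b := by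
      rw [Fin.sum_univ_castSucc (f := fun i => ∑ j : Fin (N+1),
        if i < j then J i j * spin (τ i) * spin (τ j) else 0)]
      have hlast : (∑ j : Fin (N+1),
          if Fin.last N < j then J (Fin.last N) j * spin (τ (Fin.last N)) * spin (τ j) else 0)
          = 0 := by
        refine Finset.sum_eq_zero fun j _ => ?_
        rw [if_neg (Fin.not_lt.2 (Fin.le_last j))]
      rw [hlast, add_zero]
      have hrow : ∀ i : Fin N, (∑ j : Fin (N+1),
          if i.castSucc < j then J i.castSucc j * spin (τ i.castSucc) * spin (τ j) else 0)
          = (∑ j : Fin N,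
              if i < j then J i.castSucc j.castSucc * spin (σ i) * spin (σ j) else 0)
            + J i.castSucc (Fin.last N) * spin (σ i) * spin b := by
        intro i
        rw [Fin.sum_univ_castSucc (f := fun j =>
          if i.castSucc < j then J i.castSucc j * spin (τ i.castSucc) * spin (τ j) else 0)]
        rw [if_pos (Fin.castSucc_lt_last i), hτl, hτc i]
        congr 1
        refine Finset.sum_congr rfl fun j _ => ?_
        simp only [Fin.castSucc_lt_castSucc_iff, hτc]
      rw [Finset.sum_congr rfl fun i _ => hrow i, Finset.sum_add_distrib, ← Finset.sum_mul]
    unfold hamSK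
    rw [hS, hst]
    have hcast : ((N+1 : ℕ) : ℝ) = (N : ℝ) + 1 := by push_cast; ring
    rw [hcast] at hc
    push_cast
    set A := (∑ i : Fin N, ∑ j : Fin N,
      if i < j then J i.castSucc j.castSucc * spin (σ i) * spin (σ j) else 0)
    set B := (∑ i : Fin N, J i.castSucc (Fin.last N) * spin (σ i))
    have hN1 : Real.sqrt ((N : ℝ) + 1) ≠ 0 :=
      ne_of_gt (Real.sqrt_pos.2 (by positivity))
    have hN0 : Real.sqrt (N : ℝ) ≠ 0 := by
      refine ne_of_gt (Real.sqrt_pos.2 ?_)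
      exact_mod_cast Nat.cast_pos.2 hN
    linear_combination (A + B * spin b) * hc
  set e := Fin.insertNthEquiv (fun _ : Fin (N+1) => Bool) (Fin.last N)
  set X : (Fin N → Bool) → ℝ :=
    fun σ => -β' * hamSK N (fun i j => J i.castSucc j.castSucc) σ with hX
  set C : (Fin N → Bool) → ℝ :=
    fun σ => Real.sqrt (β'^2 / (N : ℝ)) *
      ∑ i : Fin N, J i.castSucc (Fin.last N) * spin (σ i) with hC
  have hflip : ∑ σ : Fin N → Bool, Real.exp (X σ - C σ)
      = ∑ σ : Fin N → Bool, Real.exp (X σ + C σ) := by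
    refine Fintype.sum_equiv
      (Function.Involutive.toPerm (fun σ i => !(σ i)) (fun σ => by funext i; simp))
      _ _ fun σ => ?_
    simp only [Function.Involutive.toPerm, Equiv.coe_fn_mk, hX, hC]
    rw [hamSK_flip, cav_flip]
    ring_nf
  calc partZ (N+1) β J
      = ∑ p : Bool × (Fin N → Bool), Real.exp (-β * hamSK (N+1) J (e p)) :=
        (Equiv.sum_comp e _).symm
    _ = ∑ b : Bool, ∑ σ : Fin N → Bool, Real.exp (-β * hamSK (N+1) J (e (b, σ))) :=
        Fintype.sum_prod_type _
    _ = ∑ b : Bool, ∑ σ : Fin N → Bool, Real.exp (X σ + spin b * C σ) := by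
        refine Finset.sum_congr rfl fun b _ => Finset.sum_congr rfl fun σ _ => ?_
        rw [key b σ]
    _ = ∑ σ : Fin N → Bool, Real.exp (X σ + C σ)
        + ∑ σ : Fin N → Bool, Real.exp (X σ - C σ) := by
        rw [Fintype.sum_bool]
        congr 1
        · refine Finset.sum_congr rfl fun σ _ => ?_
          simp [spin]
        · refine Finset.sum_congr rfl fun σ _ => ?_
          congr 1
          simp [spin]
          ring
    _ = 2 * partZt N β' (β'^2) (fun i j => J i.castSucc j.castSucc)
          (fun i => J i.castSucc (Fin.last N)) := by
        rw [hflip]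
        unfold partZt
        ring

/-- the exact finite-volume relation
`(N+1) α_{N+1}(β) = ln 2 + N α_N(β') + Ψ_N(β'², β')` with `β' = β √(N/(N+1))`. -/
theorem free_energy_cavity_recursion (N : ℕ) (hN : 1 ≤ N) (β : ℝ) (hβ : 0 < β) :
    ((N : ℝ) + 1) * alphaN (N + 1) β
      = Real.log 2
        + (N : ℝ) * alphaN N (β * Real.sqrt ((N : ℝ) / ((N : ℝ) + 1)))
        + cavityFn N ((β * Real.sqrt ((N : ℝ) / ((N : ℝ) + 1))) ^ 2)
            (β * Real.sqrt ((N : ℝ) / ((N : ℝ) + 1))) := by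
  set β' := β * Real.sqrt ((N : ℝ) / ((N : ℝ) + 1)) with hβ'def
  set t := β' ^ 2 with htdef
  have hNpos : (0:ℝ) < (N : ℝ) := by exact_mod_cast hN
  have hβ' : 0 < β' := by
    refine mul_pos hβ (Real.sqrt_pos.2 ?_)
    positivity
  have hsN : Real.sqrt (N : ℝ) ≠ 0 := ne_of_gt (Real.sqrt_pos.2 hNpos)
  have hsN1 : Real.sqrt ((N : ℝ) + 1) ≠ 0 :=
    ne_of_gt (Real.sqrt_pos.2 (by positivity))
  have hc : β / Real.sqrt ((N+1 : ℕ) : ℝ) = β' / Real.sqrt N := by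
    rw [show ((N+1 : ℕ) : ℝ) = (N : ℝ) + 1 by push_cast; ring]
    rw [hβ'def, Real.sqrt_div hNpos.le]
    field_simp
  -- pointwise identity for the log partition function
  have hpt : ∀ J : Fin (N+1) → Fin (N+1) → ℝ,
      Real.log (partZ (N+1) β J)
        = Real.log 2
          + Real.log (partZ N β' (fun i j => J i.castSucc j.castSucc))
          + Real.log (partZt N β' t (fun i j => J i.castSucc j.castSucc)
              (fun i => J i.castSucc (Fin.last N))
            / partZ N β' (fun i j => J i.castSucc j.castSucc)) := by
    intro J
    have h := partZ_succ N hN β β' hβ' hc J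
    have hZ := partZ_pos N β' (fun i j => J i.castSucc j.castSucc)
    have hZt := partZt_pos N β' t (fun i j => J i.castSucc j.castSucc)
      (fun i => J i.castSucc (Fin.last N))
    rw [htdef] at hZt
    rw [h, Real.log_mul two_ne_zero (ne_of_gt hZt), htdef,
      Real.log_div (ne_of_gt hZt) (ne_of_gt hZ)]
    ring
  have hΦ := mp_cavity N
  -- the measurable integrand on the product space
  have hGmeas : Measurable (fun x : (Fin N → Fin N → ℝ) × (Fin N → ℝ) =>
      Real.log 2 + Real.log (partZ N β' x.1)
        + Real.log (partZt N β' t x.1 x.2 / partZ N β' x.1)) := by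
    refine (measurable_const.add ((measurable_partZ N β').comp measurable_fst).log).add ?_
    exact ((measurable_partZt N β' t).div ((measurable_partZ N β').comp measurable_fst)).log
  -- change of variables
  have hint : ∫ J, Real.log (partZ (N+1) β J) ∂(gaussJ (N+1))
      = ∫ x : (Fin N → Fin N → ℝ) × (Fin N → ℝ),
          (Real.log 2 + Real.log (partZ N β' x.1)
            + Real.log (partZt N β' t x.1 x.2 / partZ N β' x.1))
          ∂((gaussJ N).prod (gaussCav N)) := by
    calc ∫ J, Real.log (partZ (N+1) β J) ∂(gaussJ (N+1))
        = ∫ J, (Real.log 2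
            + Real.log (partZ N β'
                ((fun J : Fin (N+1) → Fin (N+1) → ℝ =>
                  ((fun i j => J i.castSucc j.castSucc,
                    fun i => J i.castSucc (Fin.last N)) :
                    (Fin N → Fin N → ℝ) × (Fin N → ℝ))) J).1)
            + Real.log (partZt N β' t
                ((fun J : Fin (N+1) → Fin (N+1) → ℝ =>
                  ((fun i j => J i.castSucc j.castSucc,
                    fun i => J i.castSucc (Fin.last N)) :
                    (Fin N → Fin N → ℝ) × (Fin N → ℝ))) J).1
                ((fun J : Fin (N+1) → Fin (N+1) → ℝ =>
                  ((fun i j => J i.castSucc j.castSucc,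
                    fun i => J i.castSucc (Fin.last N)) :
                    (Fin N → Fin N → ℝ) × (Fin N → ℝ))) J).2
              / partZ N β'
                ((fun J : Fin (N+1) → Fin (N+1) → ℝ =>
                  ((fun i j => J i.castSucc j.castSucc,
                    fun i => J i.castSucc (Fin.last N)) :
                    (Fin N → Fin N → ℝ) × (Fin N → ℝ))) J).1)) ∂(gaussJ (N+1)) :=
          integral_congr_ae (ae_of_all _ fun J => hpt J)
      _ = ∫ x : (Fin N → Fin N → ℝ) × (Fin N → ℝ),
            (Real.log 2 + Real.log (partZ N β' x.1)
              + Real.log (partZt N β' t x.1 x.2 / partZ N β' x.1))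
            ∂((gaussJ (N+1)).map (fun J : Fin (N+1) → Fin (N+1) → ℝ =>
                ((fun i j => J i.castSucc j.castSucc,
                  fun i => J i.castSucc (Fin.last N)) :
                  (Fin N → Fin N → ℝ) × (Fin N → ℝ)))) := by
          rw [integral_map hΦ.measurable.aemeasurable]
          rw [hΦ.map_eq]
          exact hGmeas.aestronglyMeasurable
      _ = ∫ x : (Fin N → Fin N → ℝ) × (Fin N → ℝ),
            (Real.log 2 + Real.log (partZ N β' x.1)
              + Real.log (partZt N β' t x.1 x.2 / partZ N β' x.1))
            ∂((gaussJ N).prod (gaussCav N)) := by rw [hΦ.map_eq]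
  -- split the integral
  have hI1 := integrable_log_partZ_fst N β'
  have hI2 := integrable_log_ratio N β' t
  have hsplit : ∫ x : (Fin N → Fin N → ℝ) × (Fin N → ℝ),
        (Real.log 2 + Real.log (partZ N β' x.1)
          + Real.log (partZt N β' t x.1 x.2 / partZ N β' x.1))
        ∂((gaussJ N).prod (gaussCav N))
      = Real.log 2
        + (∫ x : (Fin N → Fin N → ℝ) × (Fin N → ℝ),
            Real.log (partZ N β' x.1) ∂((gaussJ N).prod (gaussCav N)))
        + cavityFn N t β' := by
    have hadd1 : Integrable (fun x : (Fin N → Fin N → ℝ) × (Fin N → ℝ) =>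
        Real.log 2 + Real.log (partZ N β' x.1)) ((gaussJ N).prod (gaussCav N)) :=
      (integrable_const _).add hI1
    rw [integral_add hadd1 hI2, integral_add (integrable_const (Real.log 2)) hI1,
      integral_const]
    simp only [measure_univ, probReal_univ, ENNReal.toReal_one, one_smul]
    rfl
  -- identify the first-marginal integral
  have hfst : ∫ x : (Fin N → Fin N → ℝ) × (Fin N → ℝ),
        Real.log (partZ N β' x.1) ∂((gaussJ N).prod (gaussCav N))
      = ∫ J, Real.log (partZ N β' J) ∂(gaussJ N) := by
    have h := mp_fst (gaussJ N) (gaussCav N)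
    rw [← h.map_eq, integral_map h.measurable.aemeasurable]
    rw [h.map_eq]
    exact (measurable_partZ N β').log.aestronglyMeasurable
  -- final assembly
  have hNne : ((N : ℝ)) ≠ 0 := ne_of_gt hNpos
  have hN1ne : ((N : ℝ) + 1) ≠ 0 := by positivity
  unfold alphaN
  rw [show (((N+1 : ℕ)) : ℝ) = (N : ℝ) + 1 by push_cast; ring]
  rw [← mul_assoc, mul_inv_cancel₀ hN1ne, one_mul,
    ← mul_assoc, mul_inv_cancel₀ hNne, one_mul]
  rw [hint, hsplit, hfst]
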